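/- Let k be an algebraically closed field of characteristic zero and let F_R(X,Y) ∈ k[X,Y] denote the member of the family of Example 3.3 with parameters (a₀,a₁,a₂) ∈ k³, i.e. with φ(T)=T³+a₂T²+a₁T+a₀. Suppose F(1,1,a₀,a₁,a₂;X,Y) and F(1,1,b₀,b₁,b₂;X,Y) are equivalent under an automorphism θ of k[X,Y] of the special diagonal form θ(X)=uX, θ(Y)=vY with u,v ∈ k*, in the sense that F(1,1,a₀,a₁,a₂; uX, vY) = u^{12}v^{9}·F(1,1,b₀,b₁,b₂; X,Y). Then u = v = 1 and (a₀,a₁,a₂) = (b₀,b₁,b₂). -/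
import Mathlib

set_option maxHeartbeats 4000000
set_option maxRecDepth 10000

/-- The polynomial `F_R = F(1,1,a₀,a₁,a₂;X,Y)` of Example 3.3, with
`φ(T) = T³ + a₂T² + a₁T + a₀`. -/
noncomputable def FR (k : Type) [Field k] (a₀ a₁ a₂ : k) : MvPolynomial (Fin 2) k :=
  let x : MvPolynomial (Fin 2) k := MvPolynomial.X 0
  let y : MvPolynomial (Fin 2) k := MvPolynomial.X 1
  let p : MvPolynomial (Fin 2) k :=
    (x * y) ^ 3 + MvPolynomial.C a₂ * (x * y) ^ 2 + MvPolynomial.C a₁ * (x * y)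
      + MvPolynomial.C a₀
  x ^ 3 * p ^ 3
    + x ^ 2 * p ^ 2 * (4 * (x * y) + MvPolynomial.C a₂ + 2)
    + x * p * (6 * (x * y) ^ 2 + (4 + 3 * MvPolynomial.C a₂) * (x * y)
        + 1 + MvPolynomial.C a₁ + MvPolynomial.C a₂)
    + 4 * (x * y) ^ 3 + (2 + 3 * MvPolynomial.C a₂) * (x * y) ^ 2
    + (MvPolynomial.C a₂ + 2 * MvPolynomial.C a₁) * (x * y) + y

/-- If two members of the family `{F_R}` are equivalent under a diagonal automorphism
`X ↦ uX, Y ↦ vY` in the sense `F(1,1,a;uX,vY) = u¹²v⁹·F(1,1,b;X,Y)`, then `u = v = 1`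
and the parameter triples coincide. -/
theorem stmt12 (k : Type) [Field k] [IsAlgClosed k] [CharZero k]
    (a₀ a₁ a₂ b₀ b₁ b₂ u v : k) (hu : u ≠ 0) (hv : v ≠ 0)
    (h : MvPolynomial.aeval
          ![MvPolynomial.C u * MvPolynomial.X 0, MvPolynomial.C v * MvPolynomial.X 1]
          (FR k a₀ a₁ a₂)
        = MvPolynomial.C (u ^ 12 * v ^ 9) * FR k b₀ b₁ b₂) :
    u = 1 ∧ v = 1 ∧ a₀ = b₀ ∧ a₁ = b₁ ∧ a₂ = b₂ := by
  have h2 := congrArg (fun p => MvPolynomial.aeval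
      ![(Polynomial.X : Polynomial k), Polynomial.X ^ 13] p) h
  simp only [FR, map_add, map_mul, map_pow, map_ofNat, map_one,
    MvPolynomial.aeval_X, MvPolynomial.aeval_C, MvPolynomial.algebraMap_eq,
    Polynomial.algebraMap_eq, Matrix.cons_val_zero, Matrix.cons_val_one,
    Matrix.head_cons] at h2
  have h3 : Polynomial.C (u * (a₀ + a₀ * a₂ + a₀ * a₁)) * Polynomial.X ^ 1
      + Polynomial.C (u ^ 2 * (2 * a₀ ^ 2 + a₀ ^ 2 * a₂)) * Polynomial.X ^ 2
      + Polynomial.C (u ^ 3 * a₀ ^ 3) * Polynomial.X ^ 3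
      + Polynomial.C (v * 1) * Polynomial.X ^ 13
      + Polynomial.C (u * v * (a₂ + 2 * a₁)) * Polynomial.X ^ 14
      + Polynomial.C (u ^ 2 * v * (a₁ + a₁ * a₂ + a₁ ^ 2 + 4 * a₀ + 3 * a₀ * a₂)) * Polynomial.X ^ 15
      + Polynomial.C (u ^ 3 * v * (4 * a₀ * a₁ + 2 * a₀ * a₁ * a₂ + 4 * a₀ ^ 2)) * Polynomial.X ^ 16
      + Polynomial.C (u ^ 4 * v * 3 * a₀ ^ 2 * a₁) * Polynomial.X ^ 17
      + Polynomial.C (u ^ 2 * v ^ 2 * (2 + 3 * a₂)) * Polynomial.X ^ 28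
      + Polynomial.C (u ^ 3 * v ^ 2 * (a₂ + a₂ ^ 2 + 4 * a₁ + 4 * a₁ * a₂ + 6 * a₀)) * Polynomial.X ^ 29
      + Polynomial.C (u ^ 4 * v ^ 2 * (2 * a₁ ^ 2 + a₁ ^ 2 * a₂ + 4 * a₀ * a₂ + 2 * a₀ * a₂ ^ 2 + 8 * a₀ * a₁)) * Polynomial.X ^ 30
      + Polynomial.C (u ^ 5 * v ^ 2 * (3 * a₀ * a₁ ^ 2 + 3 * a₀ ^ 2 * a₂)) * Polynomial.X ^ 31
      + Polynomial.C (u ^ 3 * v ^ 3 * 4) * Polynomial.X ^ 42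
      + Polynomial.C (u ^ 4 * v ^ 3 * (1 + 5 * a₂ + 3 * a₂ ^ 2 + 7 * a₁)) * Polynomial.X ^ 43
      + Polynomial.C (u ^ 5 * v ^ 3 * (4 * a₁ * a₂ + 2 * a₁ * a₂ ^ 2 + 4 * a₁ ^ 2 + 4 * a₀ + 10 * a₀ * a₂)) * Polynomial.X ^ 44
      + Polynomial.C (u ^ 6 * v ^ 3 * (a₁ ^ 3 + 6 * a₀ * a₁ * a₂ + 3 * a₀ ^ 2)) * Polynomial.X ^ 45
      + Polynomial.C (u ^ 5 * v ^ 4 * (4 + 9 * a₂)) * Polynomial.X ^ 57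
      + Polynomial.C (u ^ 6 * v ^ 4 * (2 * a₂ ^ 2 + a₂ ^ 3 + 4 * a₁ + 10 * a₁ * a₂ + 8 * a₀)) * Polynomial.X ^ 58
      + Polynomial.C (u ^ 7 * v ^ 4 * (3 * a₁ ^ 2 * a₂ + 3 * a₀ * a₂ ^ 2 + 6 * a₀ * a₁)) * Polynomial.X ^ 59
      + Polynomial.C (u ^ 6 * v ^ 5 * 6) * Polynomial.X ^ 71
      + Polynomial.C (u ^ 7 * v ^ 5 * (4 * a₂ + 6 * a₂ ^ 2 + 8 * a₁)) * Polynomial.X ^ 72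
      + Polynomial.C (u ^ 8 * v ^ 5 * (3 * a₁ * a₂ ^ 2 + 3 * a₁ ^ 2 + 6 * a₀ * a₂)) * Polynomial.X ^ 73
      + Polynomial.C (u ^ 8 * v ^ 6 * (2 + 9 * a₂)) * Polynomial.X ^ 86
      + Polynomial.C (u ^ 9 * v ^ 6 * (a₂ ^ 3 + 6 * a₁ * a₂ + 3 * a₀)) * Polynomial.X ^ 87
      + Polynomial.C (u ^ 9 * v ^ 7 * 4) * Polynomial.X ^ 100
      + Polynomial.C (u ^ 10 * v ^ 7 * (3 * a₂ ^ 2 + 3 * a₁)) * Polynomial.X ^ 101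
      + Polynomial.C (u ^ 11 * v ^ 8 * 3 * a₂) * Polynomial.X ^ 115
      + Polynomial.C (u ^ 12 * v ^ 9 * 1) * Polynomial.X ^ 129
      = Polynomial.C (u ^ 12 * v ^ 9 * (b₀ + b₀ * b₂ + b₀ * b₁)) * Polynomial.X ^ 1
      + Polynomial.C (u ^ 12 * v ^ 9 * (2 * b₀ ^ 2 + b₀ ^ 2 * b₂)) * Polynomial.X ^ 2
      + Polynomial.C (u ^ 12 * v ^ 9 * b₀ ^ 3) * Polynomial.X ^ 3
      + Polynomial.C (u ^ 12 * v ^ 9 * 1) * Polynomial.X ^ 13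
      + Polynomial.C (u ^ 12 * v ^ 9 * (b₂ + 2 * b₁)) * Polynomial.X ^ 14
      + Polynomial.C (u ^ 12 * v ^ 9 * (b₁ + b₁ * b₂ + b₁ ^ 2 + 4 * b₀ + 3 * b₀ * b₂)) * Polynomial.X ^ 15
      + Polynomial.C (u ^ 12 * v ^ 9 * (4 * b₀ * b₁ + 2 * b₀ * b₁ * b₂ + 4 * b₀ ^ 2)) * Polynomial.X ^ 16
      + Polynomial.C (u ^ 12 * v ^ 9 * 3 * b₀ ^ 2 * b₁) * Polynomial.X ^ 17
      + Polynomial.C (u ^ 12 * v ^ 9 * (2 + 3 * b₂)) * Polynomial.X ^ 28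
      + Polynomial.C (u ^ 12 * v ^ 9 * (b₂ + b₂ ^ 2 + 4 * b₁ + 4 * b₁ * b₂ + 6 * b₀)) * Polynomial.X ^ 29
      + Polynomial.C (u ^ 12 * v ^ 9 * (2 * b₁ ^ 2 + b₁ ^ 2 * b₂ + 4 * b₀ * b₂ + 2 * b₀ * b₂ ^ 2 + 8 * b₀ * b₁)) * Polynomial.X ^ 30
      + Polynomial.C (u ^ 12 * v ^ 9 * (3 * b₀ * b₁ ^ 2 + 3 * b₀ ^ 2 * b₂)) * Polynomial.X ^ 31
      + Polynomial.C (u ^ 12 * v ^ 9 * 4) * Polynomial.X ^ 42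
      + Polynomial.C (u ^ 12 * v ^ 9 * (1 + 5 * b₂ + 3 * b₂ ^ 2 + 7 * b₁)) * Polynomial.X ^ 43
      + Polynomial.C (u ^ 12 * v ^ 9 * (4 * b₁ * b₂ + 2 * b₁ * b₂ ^ 2 + 4 * b₁ ^ 2 + 4 * b₀ + 10 * b₀ * b₂)) * Polynomial.X ^ 44
      + Polynomial.C (u ^ 12 * v ^ 9 * (b₁ ^ 3 + 6 * b₀ * b₁ * b₂ + 3 * b₀ ^ 2)) * Polynomial.X ^ 45
      + Polynomial.C (u ^ 12 * v ^ 9 * (4 + 9 * b₂)) * Polynomial.X ^ 57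
      + Polynomial.C (u ^ 12 * v ^ 9 * (2 * b₂ ^ 2 + b₂ ^ 3 + 4 * b₁ + 10 * b₁ * b₂ + 8 * b₀)) * Polynomial.X ^ 58
      + Polynomial.C (u ^ 12 * v ^ 9 * (3 * b₁ ^ 2 * b₂ + 3 * b₀ * b₂ ^ 2 + 6 * b₀ * b₁)) * Polynomial.X ^ 59
      + Polynomial.C (u ^ 12 * v ^ 9 * 6) * Polynomial.X ^ 71
      + Polynomial.C (u ^ 12 * v ^ 9 * (4 * b₂ + 6 * b₂ ^ 2 + 8 * b₁)) * Polynomial.X ^ 72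
      + Polynomial.C (u ^ 12 * v ^ 9 * (3 * b₁ * b₂ ^ 2 + 3 * b₁ ^ 2 + 6 * b₀ * b₂)) * Polynomial.X ^ 73
      + Polynomial.C (u ^ 12 * v ^ 9 * (2 + 9 * b₂)) * Polynomial.X ^ 86
      + Polynomial.C (u ^ 12 * v ^ 9 * (b₂ ^ 3 + 6 * b₁ * b₂ + 3 * b₀)) * Polynomial.X ^ 87
      + Polynomial.C (u ^ 12 * v ^ 9 * 4) * Polynomial.X ^ 100
      + Polynomial.C (u ^ 12 * v ^ 9 * (3 * b₂ ^ 2 + 3 * b₁)) * Polynomial.X ^ 101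
      + Polynomial.C (u ^ 12 * v ^ 9 * 3 * b₂) * Polynomial.X ^ 115
      + Polynomial.C (u ^ 12 * v ^ 9 * 1) * Polynomial.X ^ 129 := by
    simp only [map_mul, map_pow, map_add, map_ofNat, map_one]
    linear_combination h2
  have e100 := congrArg (fun q => Polynomial.coeff q 100) h3
  have e115 := congrArg (fun q => Polynomial.coeff q 115) h3
  have e28 := congrArg (fun q => Polynomial.coeff q 28) h3
  have e14 := congrArg (fun q => Polynomial.coeff q 14) h3
  have e87 := congrArg (fun q => Polynomial.coeff q 87) h3
  simp only [Polynomial.coeff_add, Polynomial.coeff_C_mul, Polynomial.coeff_X_pow] at e100 e115 e28 e14 e87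
  norm_num at e100 e115 e28 e14 e87
  -- u^3 v^2 = 1
  have hx1 : (u ^ 9 * v ^ 7) * (u ^ 3 * v ^ 2) = (u ^ 9 * v ^ 7) * 1 := by
    linear_combination -e100
  have huv : u ^ 3 * v ^ 2 = 1 :=
    mul_left_cancel₀ (mul_ne_zero (pow_ne_zero _ hu) (pow_ne_zero _ hv)) hx1
  -- a₂ = b₂ u v
  have hx2 : (3 * (u ^ 11 * v ^ 8)) * a₂ = (3 * (u ^ 11 * v ^ 8)) * (b₂ * (u * v)) := by
    linear_combination e115
  have ha2 : a₂ = b₂ * (u * v) :=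
    mul_left_cancel₀ (mul_ne_zero (by norm_num) (mul_ne_zero (pow_ne_zero _ hu) (pow_ne_zero _ hv))) hx2
  have h12 : u ^ 12 * v ^ 9 = v := by
    linear_combination (v * ((u ^ 3 * v ^ 2) ^ 3 + (u ^ 3 * v ^ 2) ^ 2 + u ^ 3 * v ^ 2 + 1)) * huv
  -- u^2 v = 1
  have hx3 : (2 * v) * (u ^ 2 * v) = (2 * v) * 1 := by
    linear_combination e28 + (2 + 3 * b₂) * h12 - 3 * u ^ 2 * v ^ 2 * ha2 - 3 * b₂ * v * huv
  have hu2 : u ^ 2 * v = 1 := mul_left_cancel₀ (mul_ne_zero (by norm_num) hv) hx3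
  have hx4 : (u ^ 2 * v) * (u * v) = (u ^ 2 * v) * 1 := by linear_combination huv - hu2
  have huv1 : u * v = 1 := mul_left_cancel₀ (mul_ne_zero (pow_ne_zero _ hu) hv) hx4
  have hu1 : u = 1 := by linear_combination hu2 - u * huv1
  have hv1 : v = 1 := by linear_combination huv1 - v * hu1
  have ha2f : a₂ = b₂ := by linear_combination ha2 + b₂ * v * hu1 + b₂ * hv1
  rw [hu1, hv1] at e14 e87
  have ha1 : a₁ = b₁ := by linear_combination e14 / 2 - ha2f / 2
  have ha0 : a₀ = b₀ := by
    linear_combination e87 / 3 - 2 * a₂ * ha1 - 2 * b₁ * ha2f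
      - (a₂ ^ 2 + a₂ * b₂ + b₂ ^ 2) / 3 * ha2f
  exact ⟨hu1, hv1, ha0, ha1, ha2f⟩
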